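/- Let A = (a_{j-k} - a_{j+k+2})_{j,k≥0} where a_n = a_{-n}, and set a_k^+ = 2a_k - a_{k-1} - a_{k+1}, A^+ = (a^+_{j-k} + a^+_{j+k+1})_{j,k≥0}. Let D_+ be the lower bidiagonal infinite matrix with 1 on the diagonal and -1 on the subdiagonal. Then D_+ A D_+^T = A^+ (entrywise equality of infinite matrices). -/
import Mathlib


/-- `D₊ A D₊ᵀ = A⁺`, where `A = (a_{j-k} - a_{j+k+2})`,
`a⁺_k = 2a_k - a_{k-1} - a_{k+1}`, `A⁺ = (a⁺_{j-k} + a⁺_{j+k+1})`, and `D₊ = T(1-z)`. -/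
theorem Dplus_A_Dplus (a ap : ℤ → ℂ) (heven : ∀ n : ℤ, a n = a (-n))
    (hap : ∀ k : ℤ, ap k = 2 * a k - a (k - 1) - a (k + 1))
    (A Ap : ℕ → ℕ → ℂ) (Dp : ℕ → ℕ → ℂ)
    (hA : ∀ j k : ℕ, A j k = a ((j : ℤ) - k) - a ((j : ℤ) + k + 2))
    (hAp : ∀ j k : ℕ, Ap j k = ap ((j : ℤ) - k) + ap ((j : ℤ) + k + 1))
    (hDp : ∀ j k : ℕ, Dp j k = if j = k then 1 else if (j : ℤ) = k + 1 then -1 else 0) :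
    ∀ j k : ℕ, (∑' i : ℕ, ∑' l : ℕ, Dp j i * A i l * Dp k l) = Ap j k := by
  intro j k
  have hzero : ∀ m l : ℕ, l ≠ m → (m = 0 ∨ l ≠ m - 1) → Dp m l = 0 := by
    intro m l h1 h2
    rw [hDp, if_neg (by omega), if_neg (by omega)]
  have hin : ∀ i : ℕ, (∑' l : ℕ, Dp j i * A i l * Dp k l)
      = Dp j i * (A i k - (if k = 0 then 0 else A i (k - 1))) := by
    intro i
    rcases k with _ | q
    · rw [tsum_eq_single 0 (by
        intro l hl
        rw [hzero 0 l hl (Or.inl rfl)]; ring)]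
      simp [hDp]
    · rw [tsum_eq_sum (s := {q, q + 1}) (by
        intro l hl
        simp only [Finset.mem_insert, Finset.mem_singleton, not_or] at hl
        rw [hzero (q+1) l hl.2 (Or.inr (by omega))]; ring)]
      rw [Finset.sum_pair (by omega : q ≠ q + 1)]
      have h1 : Dp (q+1) q = -1 := by rw [hDp, if_neg (by omega), if_pos (by push_cast; ring)]
      have h2 : Dp (q+1) (q+1) = 1 := by rw [hDp, if_pos rfl]
      simp [h1, h2]
      ring
  rw [tsum_congr hin]
  have hout : (∑' i : ℕ, Dp j i * (A i k - (if k = 0 then 0 else A i (k - 1))))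
      = (A j k - (if k = 0 then 0 else A j (k - 1)))
        - (if j = 0 then 0 else (A (j-1) k - (if k = 0 then 0 else A (j-1) (k - 1)))) := by
    rcases j with _ | p
    · rw [tsum_eq_single 0 (by
        intro l hl
        rw [hzero 0 l hl (Or.inl rfl)]; ring)]
      simp [hDp]
    · rw [tsum_eq_sum (s := {p, p + 1}) (by
        intro l hl
        simp only [Finset.mem_insert, Finset.mem_singleton, not_or] at hl
        rw [hzero (p+1) l hl.2 (Or.inr (by omega))]; ring)]
      rw [Finset.sum_pair (by omega : p ≠ p + 1)]
      have h1 : Dp (p+1) p = -1 := by rw [hDp, if_neg (by omega), if_pos (by push_cast; ring)]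
      have h2 : Dp (p+1) (p+1) = 1 := by rw [hDp, if_pos rfl]
      simp [h1, h2]
      ring
  rw [hout]
  rcases j with _ | p <;> rcases k with _ | q <;>
    simp only [hA, hAp, hap, if_true, if_neg (Nat.succ_ne_zero _), if_pos rfl,
      Nat.add_sub_cancel] <;> push_cast <;> ring_nf
  · rw [show (-1 : ℤ) = -(1:ℤ) by ring, ← heven 1]; ring
  · rw [show (-1 - (q:ℤ)) = -(1 + q) by ring, show (-2 - (q:ℤ)) = -(2 + q) by ring,
      ← heven (1 + q), ← heven (2 + q)]
    ring
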